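/- Let A₁ = A(r₁) ⊆ Matrix (Fin n) (Fin n) ℂ and A₂ = A(r₂) ⊆ Matrix (Fin m) (Fin m) ℂ be digraph algebras with their diagonal masas, and let φ₁, φ₂ : A₁ → A₂ be injective standard regular star-extendible homomorphisms. If there exists a unitary U ∈ A₂ such that Uᴴ · φ₁(a) · U = φ₂(a) for all a ∈ A₁, then there exists a unitary V ∈ A₂ lying in the normaliser N_{D_m}(A₂) of the diagonal masa such that Vᴴ · φ₁(a) · V = φ₂(a) for all a ∈ A₁. -/

import Mathlib

open Matrix

noncomputable section

/-- The digraph algebra `A(r)`: matrices supported on the relation `r`. -/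
def digraphAlg (n : ℕ) (r : Fin n → Fin n → Prop) : Set (Matrix (Fin n) (Fin n) ℂ) :=
  {M | ∀ i j, ¬ r i j → M i j = 0}

/-- `C*(A(r))`: the *-subalgebra of `Mₙ(ℂ)` generated by `A(r)`. -/
def cstarAlg (n : ℕ) (r : Fin n → Fin n → Prop) : Set (Matrix (Fin n) (Fin n) ℂ) :=
  (StarAlgebra.adjoin ℂ (digraphAlg n r) : StarSubalgebra ℂ (Matrix (Fin n) (Fin n) ℂ))

/-- A star-extendible homomorphism `A(r₁) → A(r₂)`, as (the extension to `C*(A(r₁))` of) a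
function which is a ⋆-algebra homomorphism on `C*(A(r₁))` and maps `A(r₁)` into `A(r₂)`. -/
def IsStarExtHom (n m : ℕ) (r₁ : Fin n → Fin n → Prop) (r₂ : Fin m → Fin m → Prop)
    (Φ : Matrix (Fin n) (Fin n) ℂ → Matrix (Fin m) (Fin m) ℂ) : Prop :=
  (∀ x ∈ cstarAlg n r₁, ∀ y ∈ cstarAlg n r₁, Φ (x + y) = Φ x + Φ y) ∧
  (∀ (c : ℂ), ∀ x ∈ cstarAlg n r₁, Φ (c • x) = c • Φ x) ∧
  (∀ x ∈ cstarAlg n r₁, ∀ y ∈ cstarAlg n r₁, Φ (x * y) = Φ x * Φ y) ∧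
  (∀ x ∈ cstarAlg n r₁, Φ xᴴ = (Φ x)ᴴ) ∧
  (∀ a ∈ digraphAlg n r₁, Φ a ∈ digraphAlg m r₂)

/-- `Φ` has multiplicity one: every diagonal matrix unit is sent to a matrix of rank ≤ 1. -/
def MultOne (n m : ℕ) (Φ : Matrix (Fin n) (Fin n) ℂ → Matrix (Fin m) (Fin m) ℂ) : Prop :=
  ∀ i : Fin n, (Φ (single i i (1 : ℂ))).rank ≤ 1

/-- `Φ` is regular (1-decomposable): a finite direct sum of multiplicity one star-extendible
homomorphisms with mutually orthogonal ranges. -/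
def IsRegularHom (n m : ℕ) (r₁ : Fin n → Fin n → Prop) (r₂ : Fin m → Fin m → Prop)
    (Φ : Matrix (Fin n) (Fin n) ℂ → Matrix (Fin m) (Fin m) ℂ) : Prop :=
  IsStarExtHom n m r₁ r₂ Φ ∧
  ∃ (d : ℕ) (Ψ : Fin d → Matrix (Fin n) (Fin n) ℂ → Matrix (Fin m) (Fin m) ℂ),
    (∀ t, IsStarExtHom n m r₁ r₂ (Ψ t) ∧ MultOne n m (Ψ t)) ∧
    (∀ s t, s ≠ t → Ψ s 1 * Ψ t 1 = 0) ∧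
    (∀ x ∈ cstarAlg n r₁, Φ x = ∑ t, Ψ t x)

/-- The partial isometry normaliser `N_{Dₘ}(A(r))` of the diagonal masa in `A(r)`. -/
def diagNormaliser (m : ℕ) (r : Fin m → Fin m → Prop) : Set (Matrix (Fin m) (Fin m) ℂ) :=
  {v | v ∈ digraphAlg m r ∧ v * vᴴ * v = v ∧
    ∀ d : Matrix (Fin m) (Fin m) ℂ, d.IsDiag → (vᴴ * d * v).IsDiag ∧ (v * d * vᴴ).IsDiag}

/-- `Φ` is standard regular: regular and mapping the diagonal normaliser into the
diagonal normaliser. -/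
def IsStandardRegularHom (n m : ℕ) (r₁ : Fin n → Fin n → Prop) (r₂ : Fin m → Fin m → Prop)
    (Φ : Matrix (Fin n) (Fin n) ℂ → Matrix (Fin m) (Fin m) ℂ) : Prop :=
  IsRegularHom n m r₁ r₂ Φ ∧ ∀ v ∈ diagNormaliser n r₁, Φ v ∈ diagNormaliser m r₂

/-- A unitary element of the digraph algebra `A(r)`. -/
def IsUnitaryIn (m : ℕ) (r : Fin m → Fin m → Prop) (U : Matrix (Fin m) (Fin m) ℂ) : Prop :=
  U ∈ digraphAlg m r ∧ Uᴴ * U = 1 ∧ U * Uᴴ = 1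

/-- The L²→L² operator norm of a matrix. -/
def l2OpNorm {k : ℕ} (a : Matrix (Fin k) (Fin k) ℂ) : ℝ :=
  ‖Matrix.toEuclideanCLM (𝕜 := ℂ) a‖

namespace DGP


variable {m : ℕ}

lemma stdBasis_conjT {k : ℕ} (a b : Fin k) (c : ℂ) :
    (single a b c)ᴴ = single b a (star c) := by
  ext i j
  simp only [conjTranspose_apply, single, of_apply]
  by_cases h1 : a = j <;> by_cases h2 : b = i <;> simp [h1, h2, and_comm]

lemma isDiag_stdBasis {k : ℕ} (p : Fin k) (c : ℂ) : (single p p c).IsDiag := by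
  intro i j hij
  simp only [single, of_apply]
  rw [if_neg]
  rintro ⟨rfl, rfl⟩
  exact hij rfl

lemma mul_stdBasis_mul (A B : Matrix (Fin m) (Fin m) ℂ) (p q : Fin m) (c : ℂ) (k l : Fin m) :
    (A * single p q c * B) k l = A k p * (c * B q l) := by
  rw [Matrix.mul_assoc, Matrix.mul_apply]
  rw [Finset.sum_eq_single p]
  · rw [Matrix.single_mul_apply_same]
  · intro b _ hb
    rw [Matrix.single_mul_apply_of_ne _ _ _ _ _ hb, mul_zero]
  · intro h; exact absurd (Finset.mem_univ p) h

lemma stdBasis_mul_mul (d : Matrix (Fin m) (Fin m) ℂ) (a b c c' : Fin m) :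
    single a b (1:ℂ) * d * single c c' (1:ℂ) =
      single a c' (d b c) := by
  ext k l
  rw [show single a b (1:ℂ) * d * single c c' 1
      = single a b (1:ℂ) * (d * single c c' 1) from Matrix.mul_assoc _ _ _]
  by_cases hk : a = k
  · subst hk
    rw [Matrix.single_mul_apply_same, one_mul]
    by_cases hl : c' = l
    · subst hl
      rw [Matrix.mul_single_apply_same, mul_one]
      simp [single]
    · rw [Matrix.mul_single_apply_of_ne _ _ _ _ _ (fun h => hl h.symm)]
      simp [single, fun h => hl h]
  · rw [Matrix.single_mul_apply_of_ne _ _ _ _ _ (fun h => hk h.symm)]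
    simp [single, fun h => hk h]


lemma diag_mul_apply {D X : Matrix (Fin m) (Fin m) ℂ} (hD : D.IsDiag) (k l : Fin m) :
    (D * X) k l = D k k * X k l := by
  rw [Matrix.mul_apply, Finset.sum_eq_single k]
  · intro b _ hb; rw [hD (Ne.symm hb), zero_mul]
  · intro h; exact absurd (Finset.mem_univ k) h


lemma mul_diag_apply {D X : Matrix (Fin m) (Fin m) ℂ} (hD : D.IsDiag) (k l : Fin m) :
    (X * D) k l = X k l * D l l := by
  rw [Matrix.mul_apply, Finset.sum_eq_single l]
  · intro b _ hb; rw [hD hb, mul_zero]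
  · intro h; exact absurd (Finset.mem_univ l) h


lemma diag_comm {D E : Matrix (Fin m) (Fin m) ℂ} (hD : D.IsDiag) (hE : E.IsDiag) :
    D * E = E * D := by
  ext k l
  rw [diag_mul_apply hD, mul_diag_apply hD]
  by_cases h : k = l
  · subst h; ring
  · rw [hE h, mul_zero, zero_mul]


lemma isDiag_sum {ι : Type*} (s : Finset ι) (f : ι → Matrix (Fin m) (Fin m) ℂ)
    (h : ∀ t ∈ s, (f t).IsDiag) : (∑ t ∈ s, f t).IsDiag := by
  intro k l hkl
  rw [Matrix.sum_apply]
  exact Finset.sum_eq_zero fun t ht => h t ht hkl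


/-- `Nrm v` : `v` normalises the diagonal masa. -/
def Nrm (v : Matrix (Fin m) (Fin m) ℂ) : Prop :=
  ∀ d : Matrix (Fin m) (Fin m) ℂ, d.IsDiag → (vᴴ * d * v).IsDiag ∧ (v * d * vᴴ).IsDiag

lemma Nrm.conjT {v : Matrix (Fin m) (Fin m) ℂ} (h : Nrm v) : Nrm vᴴ := by
  intro d hd
  constructor
  · simpa using (h d hd).2
  · simpa using (h d hd).1

lemma Nrm.mul {v w : Matrix (Fin m) (Fin m) ℂ} (hv : Nrm v) (hw : Nrm w) : Nrm (v * w) := by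
  intro d hd
  constructor
  · have := (hw (vᴴ * d * v) (hv d hd).1).1
    simpa [conjTranspose_mul, Matrix.mul_assoc] using this
  · have := (hv (w * d * wᴴ) (hw d hd).2).2
    simpa [conjTranspose_mul, Matrix.mul_assoc] using this

lemma Nrm.row_sparse {v : Matrix (Fin m) (Fin m) ℂ} (h : Nrm v) (k p p' : Fin m)
    (h1 : v k p ≠ 0) (h2 : v k p' ≠ 0) : p = p' := by
  by_contra hne
  have hd : ((vᴴ * single k k 1 * v : Matrix (Fin m) (Fin m) ℂ)) p p' = 0 :=
    (h (single k k 1) (isDiag_stdBasis k 1)).1 hne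
  rw [mul_stdBasis_mul, one_mul, conjTranspose_apply] at hd
  rcases mul_eq_zero.mp hd with h' | h'
  · exact h1 (by simpa using h')
  · exact h2 h'

lemma Nrm.col_sparse {v : Matrix (Fin m) (Fin m) ℂ} (h : Nrm v) (l k k' : Fin m)
    (h1 : v k l ≠ 0) (h2 : v k' l ≠ 0) : k = k' := by
  by_contra hne
  have hd : ((v * single l l 1 * vᴴ : Matrix (Fin m) (Fin m) ℂ)) k k' = 0 :=
    (h (single l l 1) (isDiag_stdBasis l 1)).2 hne
  rw [mul_stdBasis_mul, one_mul, conjTranspose_apply] at hd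
  rcases mul_eq_zero.mp hd with h' | h'
  · exact h1 h'
  · exact h2 (by simpa using h')

lemma isDiag_of_nrm_proj {Q : Matrix (Fin m) (Fin m) ℂ} (hh : Qᴴ = Q) (h2 : Q * Q = Q)
    (hN : ∀ d : Matrix (Fin m) (Fin m) ℂ, d.IsDiag → (Qᴴ * d * Q).IsDiag) : Q.IsDiag := by
  intro k l hkl
  have hQ : Q k l = ∑ p, Q k p * Q p l := by rw [← Matrix.mul_apply, h2]
  rw [hQ]
  refine Finset.sum_eq_zero fun p _ => ?_
  have hz : ((Qᴴ * single p p 1 * Q : Matrix (Fin m) (Fin m) ℂ)) k l = 0 :=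
    hN (single p p 1) (isDiag_stdBasis p 1) hkl
  rw [mul_stdBasis_mul, one_mul] at hz
  have hkp : Q k p = Qᴴ k p := by rw [hh]
  rw [hkp, hz]

lemma collapse (F X G : Matrix (Fin m) (Fin m) ℂ)
    (hF : ∀ k p p', F k p ≠ 0 → F k p' ≠ 0 → p = p')
    (hG : ∀ l q q', G q l ≠ 0 → G q' l ≠ 0 → q = q')
    {k l p q : Fin m} (hFk : F k p ≠ 0) (hGl : G q l ≠ 0) :
    (F * X * G) k l = F k p * X p q * G q l := by
  rw [Matrix.mul_apply, Finset.sum_eq_single q]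
  · rw [Matrix.mul_apply, Finset.sum_eq_single p]
    · intro p' _ hp'
      by_cases h : F k p' = 0
      · rw [h, zero_mul]
      · exact absurd (hF k p' p h hFk) hp'
    · intro h; exact absurd (Finset.mem_univ p) h
  · intro q' _ hq'
    by_cases h : G q' l = 0
    · rw [h, mul_zero]
    · exact absurd (hG l q' q h hGl) hq'
  · intro h; exact absurd (Finset.mem_univ q) h

lemma supp_transfer (F X Y G : Matrix (Fin m) (Fin m) ℂ)
    (hF : ∀ k p p', F k p ≠ 0 → F k p' ≠ 0 → p = p')
    (hG : ∀ l q q', G q l ≠ 0 → G q' l ≠ 0 → q = q')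
    (hXY : ∀ p q, Y p q = 0 → X p q = 0) :
    ∀ k l, (F * Y * G) k l = 0 → (F * X * G) k l = 0 := by
  intro k l h0
  by_contra hne
  have hex : ∃ p q, F k p ≠ 0 ∧ X p q ≠ 0 ∧ G q l ≠ 0 := by
    by_contra hc
    push_neg at hc
    apply hne
    rw [Matrix.mul_apply]
    refine Finset.sum_eq_zero fun q _ => ?_
    rw [Matrix.mul_apply, Finset.sum_mul]
    refine Finset.sum_eq_zero fun p _ => ?_
    by_cases h1 : F k p = 0
    · rw [h1, zero_mul, zero_mul]
    by_cases h2 : X p q = 0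
    · rw [h2, mul_zero, zero_mul]
    have := hc p q h1 h2
    rw [this, mul_zero]
  obtain ⟨p, q, h1, h2, h3⟩ := hex
  have hY : Y p q ≠ 0 := fun h => h2 (hXY p q h)
  rw [collapse F Y G hF hG h1 h3] at h0
  exact (mul_ne_zero (mul_ne_zero h1 hY) h3) h0

lemma diag01_sum (R : Matrix (Fin m) (Fin m) ℂ) (hRd : R.IsDiag)
    (h01 : ∀ k, R k k = 0 ∨ R k k = 1) :
    R = ∑ t : {l : Fin m // R l l ≠ 0}, single (t : Fin m) (t : Fin m) (1:ℂ) := by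
  classical
  ext k l
  rw [Matrix.sum_apply]
  by_cases hkl : k = l
  · subst hkl
    by_cases hk : R k k = 0
    · rw [hk]
      symm
      refine Finset.sum_eq_zero fun t _ => ?_
      simp only [single, of_apply]
      rw [if_neg]
      rintro ⟨rfl, -⟩
      exact t.2 hk
    · have h1 : R k k = 1 := (h01 k).resolve_left hk
      rw [h1, Finset.sum_eq_single (⟨k, hk⟩ : {l : Fin m // R l l ≠ 0})]
      · simp [single]
      · intro t _ ht
        simp only [single, of_apply]
        rw [if_neg]
        rintro ⟨h, -⟩
        exact ht (Subtype.ext h)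
      · intro h; exact absurd (Finset.mem_univ _) h
  · rw [hRd hkl]
    symm
    refine Finset.sum_eq_zero fun t _ => ?_
    simp only [single, of_apply]
    rw [if_neg]
    rintro ⟨rfl, rfl⟩
    exact hkl rfl


lemma perm_sub (B Q R : Matrix (Fin m) (Fin m) ℂ)
    (hQd : Q.IsDiag) (hRd : R.IsDiag) (hQ2 : Q * Q = Q) (hR2 : R * R = R)
    (hBQ : B * Bᴴ = Q) (hBR : Bᴴ * B = R) :
    ∃ W : Matrix (Fin m) (Fin m) ℂ,
      Wᴴ * W = R ∧ W * Wᴴ = Q ∧ Q * W = W ∧ W * R = W ∧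
      (∀ k l, B k l = 0 → W k l = 0) ∧ Nrm W := by
  classical
  have hQ01 : ∀ k, Q k k = 0 ∨ Q k k = 1 := by
    intro k
    have h : Q k k * Q k k = Q k k := by
      have := congrFun (congrFun hQ2 k) k
      rwa [diag_mul_apply hQd] at this
    rcases mul_eq_zero.mp (show Q k k * (Q k k - 1) = 0 by rw [mul_sub, h, mul_one, sub_self]) with h' | h'
    · exact Or.inl h'
    · exact Or.inr (by linear_combination h')
  have hR01 : ∀ k, R k k = 0 ∨ R k k = 1 := by
    intro k
    have h : R k k * R k k = R k k := by
      have := congrFun (congrFun hR2 k) k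
      rwa [diag_mul_apply hRd] at this
    rcases mul_eq_zero.mp (show R k k * (R k k - 1) = 0 by rw [mul_sub, h, mul_one, sub_self]) with h' | h'
    · exact Or.inl h'
    · exact Or.inr (by linear_combination h')
  have hrow : ∀ k, Q k k = 0 → ∀ l, B k l = 0 := by
    intro k hk l
    have h0 : ((B * Bᴴ : Matrix (Fin m) (Fin m) ℂ)) k k = 0 := by rw [hBQ]; exact hk
    rw [Matrix.mul_apply] at h0
    have hterm : ∀ j, B k j * Bᴴ j k = (Complex.normSq (B k j) : ℂ) := fun j => by
      rw [conjTranspose_apply]; simpa using Complex.mul_conj (B k j)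
    rw [Finset.sum_congr rfl (fun j _ => hterm j)] at h0
    have h0' : ∑ j, Complex.normSq (B k j) = 0 := by exact_mod_cast h0
    have := (Finset.sum_eq_zero_iff_of_nonneg
      (fun j _ => Complex.normSq_nonneg (B k j))).mp h0' l (Finset.mem_univ l)
    exact Complex.normSq_eq_zero.mp this
  have hcol : ∀ l, R l l = 0 → ∀ k, B k l = 0 := by
    intro l hl k
    have h0 : ((Bᴴ * B : Matrix (Fin m) (Fin m) ℂ)) l l = 0 := by rw [hBR]; exact hl
    rw [Matrix.mul_apply] at h0
    have hterm : ∀ j, Bᴴ l j * B j l = (Complex.normSq (B j l) : ℂ) := fun j => by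
      rw [conjTranspose_apply]; simpa [mul_comm] using Complex.mul_conj (B j l)
    rw [Finset.sum_congr rfl (fun j _ => hterm j)] at h0
    have h0' : ∑ j, Complex.normSq (B j l) = 0 := by exact_mod_cast h0
    have := (Finset.sum_eq_zero_iff_of_nonneg
      (fun j _ => Complex.normSq_nonneg (B j l))).mp h0' k (Finset.mem_univ k)
    exact Complex.normSq_eq_zero.mp this
  -- cardinalities
  have htrace : Matrix.trace Q = Matrix.trace R := by
    rw [← hBQ, ← hBR, Matrix.trace_mul_comm]
  have hcardQ : Matrix.trace Q = (Fintype.card {k : Fin m // Q k k ≠ 0} : ℂ) := by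
    rw [Matrix.trace]
    rw [Finset.sum_congr rfl (fun k _ => show Q.diag k = if Q k k ≠ 0 then (1:ℂ) else 0 by
      rcases hQ01 k with h'|h' <;> simp [Matrix.diag, h'])]
    rw [Finset.sum_boole, Fintype.card_subtype]
  have hcardR : Matrix.trace R = (Fintype.card {k : Fin m // R k k ≠ 0} : ℂ) := by
    rw [Matrix.trace]
    rw [Finset.sum_congr rfl (fun k _ => show R.diag k = if R k k ≠ 0 then (1:ℂ) else 0 by
      rcases hR01 k with h'|h' <;> simp [Matrix.diag, h'])]
    rw [Finset.sum_boole, Fintype.card_subtype]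
  have hcard : Fintype.card {k : Fin m // R k k ≠ 0} = Fintype.card {k : Fin m // Q k k ≠ 0} := by
    have h := htrace
    rw [hcardQ, hcardR] at h
    exact_mod_cast h.symm
  set T := {k : Fin m // R k k ≠ 0}
  set S := {k : Fin m // Q k k ≠ 0}
  obtain e := Fintype.equivOfCardEq hcard
  set B' : Matrix T T ℂ := Matrix.of (fun t t' : T => B (e t) t') with hB'def
  have hB' : B'ᴴ * B' = 1 := by
    ext t t'
    rw [Matrix.mul_apply]
    have hterm : ∀ t'' : T, B'ᴴ t t'' * B' t'' t'
        = star (B ((e t'' : S) : Fin m) (t : Fin m)) * B ((e t'' : S) : Fin m) (t' : Fin m) :=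
      fun t'' => rfl
    rw [Finset.sum_congr rfl (fun t'' _ => hterm t'')]
    have hre : ∑ t'' : T, star (B ((e t'' : S) : Fin m) (t : Fin m)) * B ((e t'' : S) : Fin m) (t' : Fin m)
        = ∑ s : S, star (B (s : Fin m) (t : Fin m)) * B (s : Fin m) (t' : Fin m) :=
      Equiv.sum_comp e (fun s : S => star (B (s : Fin m) (t : Fin m)) * B (s : Fin m) (t' : Fin m))
    rw [hre]
    have hsub : ∑ s : S, star (B (s : Fin m) (t : Fin m)) * B (s : Fin m) (t' : Fin m)
        = ∑ k ∈ Finset.univ.filter (fun k : Fin m => Q k k ≠ 0),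
            star (B k (t : Fin m)) * B k (t' : Fin m) :=
      (Finset.sum_subtype (p := fun k : Fin m => Q k k ≠ 0)
        (s := Finset.univ.filter (fun k : Fin m => Q k k ≠ 0))
        (fun x => by simp)
        (fun k => star (B k (t : Fin m)) * B k (t' : Fin m))).symm
    rw [hsub, Finset.sum_filter_of_ne (by
      intro k _ hk
      intro hQk
      exact hk (by rw [hrow k hQk, star_zero, zero_mul]))]
    have : ∑ k : Fin m, star (B k (t : Fin m)) * B k (t' : Fin m)
        = ((Bᴴ * B : Matrix (Fin m) (Fin m) ℂ)) (t : Fin m) (t' : Fin m) := by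
      rw [Matrix.mul_apply]
      exact Finset.sum_congr rfl fun k _ => rfl
    rw [this, hBR, Matrix.one_apply]
    by_cases h : t = t'
    · subst h
      rw [if_pos rfl, (hR01 t).resolve_left t.2]
    · rw [if_neg h, hRd (fun hc => h (Subtype.ext hc))]
  have hdet : B'.det ≠ 0 := by
    intro h0
    have := congrArg Matrix.det hB'
    rw [Matrix.det_mul, h0, mul_zero, Matrix.det_one] at this
    exact zero_ne_one this
  obtain ⟨σ, hσ⟩ : ∃ σ : Equiv.Perm T, ∀ t, B' (σ t) t ≠ 0 := by
    by_contra hc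
    push_neg at hc
    apply hdet
    rw [Matrix.det_apply]
    refine Finset.sum_eq_zero fun σ _ => ?_
    obtain ⟨t, ht⟩ := hc σ
    rw [show (∏ i : T, B' (σ i) i) = 0 from
      Finset.prod_eq_zero (Finset.mem_univ t) ht, smul_zero]
  set f : T → Fin m := fun t => ((e (σ t) : S) : Fin m) with hfdef
  have hfinj : Function.Injective f := by
    intro a b hab
    exact σ.injective (e.injective (Subtype.ext hab))
  have hfS : ∀ t, Q (f t) (f t) ≠ 0 := fun t => (e (σ t)).2
  set W : Matrix (Fin m) (Fin m) ℂ :=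
    ∑ t : T, single (f t) ((t : Fin m)) (1:ℂ) with hWdef
  have hWapply : ∀ k l, W k l = ∑ t : T, (if f t = k ∧ (t : Fin m) = l then (1:ℂ) else 0) := by
    intro k l
    rw [hWdef, Matrix.sum_apply]
    rfl
  have hWne : ∀ k l, W k l ≠ 0 → ∃ t : T, f t = k ∧ (t : Fin m) = l := by
    intro k l h
    by_contra hc
    push_neg at hc
    apply h
    rw [hWapply]
    refine Finset.sum_eq_zero fun t _ => if_neg ?_
    rintro ⟨ha, hb⟩
    exact hc t ha hb
  have hWW : Wᴴ * W = R := by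
    have : Wᴴ * W = ∑ t : T, single ((t : Fin m)) ((t : Fin m)) (1:ℂ) := by
      rw [hWdef, Matrix.conjTranspose_sum, Finset.sum_mul]
      refine Finset.sum_congr rfl fun t _ => ?_
      rw [Finset.mul_sum, Finset.sum_eq_single t]
      · rw [stdBasis_conjT, Matrix.single_mul_single_same, star_one, one_mul]
      · intro t' _ hne
        rw [stdBasis_conjT]
        exact Matrix.single_mul_single_of_ne _ _ _ _ (fun h => hne (hfinj h).symm) _
      · intro h; exact absurd (Finset.mem_univ t) h
    rw [this, ← diag01_sum R hRd hR01]
  have hWWQ : W * Wᴴ = Q := by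
    have h1 : W * Wᴴ = ∑ t : T, single (f t) (f t) (1:ℂ) := by
      rw [hWdef, Matrix.conjTranspose_sum, Finset.sum_mul]
      refine Finset.sum_congr rfl fun t _ => ?_
      rw [Finset.mul_sum, Finset.sum_eq_single t]
      · rw [stdBasis_conjT, Matrix.single_mul_single_same, star_one, one_mul]
      · intro t' _ hne
        rw [stdBasis_conjT]
        exact Matrix.single_mul_single_of_ne _ _ _ _
          (fun h => hne (Subtype.ext h).symm) _
      · intro h; exact absurd (Finset.mem_univ t) h
    have h2 : ∑ t : T, single (f t) (f t) (1:ℂ)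
        = ∑ s : S, single ((s : Fin m)) ((s : Fin m)) (1:ℂ) := by
      exact Equiv.sum_comp (σ.trans e)
        (fun s : S => single ((s : Fin m)) ((s : Fin m)) (1:ℂ))
    rw [h1, h2, ← diag01_sum Q hQd hQ01]
  have hQW : Q * W = W := by
    ext k l
    rw [diag_mul_apply hQd]
    by_cases h : W k l = 0
    · rw [h, mul_zero]
    · obtain ⟨t, ht1, ht2⟩ := hWne k l h
      rw [← ht1, (hQ01 (f t)).resolve_left (hfS t), one_mul]
  have hWR : W * R = W := by
    ext k l
    rw [mul_diag_apply hRd]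
    by_cases h : W k l = 0
    · rw [h, zero_mul]
    · obtain ⟨t, ht1, ht2⟩ := hWne k l h
      rw [← ht2, (hR01 (t : Fin m)).resolve_left t.2, mul_one]
  have hsupp : ∀ k l, B k l = 0 → W k l = 0 := by
    intro k l hB
    by_contra h
    obtain ⟨t, ht1, ht2⟩ := hWne k l h
    apply hσ t
    show B' (σ t) t = 0
    have heq : B' (σ t) t = B (f t) ((t : Fin m)) := rfl
    rw [heq, ht1, ht2]
    exact hB
  have hNrm : Nrm W := by
    intro d hd
    constructor
    · have hform : Wᴴ * d * W = ∑ t : T,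
          single ((t : Fin m)) ((t : Fin m)) (d (f t) (f t)) := by
        calc Wᴴ * d * W
            = ∑ t : T, ∑ t' : T, (single (f t) ((t : Fin m)) (1:ℂ))ᴴ * d
                * single (f t') ((t' : Fin m)) (1:ℂ) := by
              rw [hWdef, Matrix.conjTranspose_sum, Finset.sum_mul, Finset.sum_mul]
              exact Finset.sum_congr rfl fun t _ => by rw [Finset.mul_sum]
          _ = ∑ t : T, ∑ t' : T,
                single ((t : Fin m)) ((t' : Fin m)) (d (f t) (f t')) := by
              refine Finset.sum_congr rfl fun t _ => Finset.sum_congr rfl fun t' _ => ?_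
              rw [stdBasis_conjT, star_one]
              exact stdBasis_mul_mul d _ _ _ _
          _ = ∑ t : T, single ((t : Fin m)) ((t : Fin m)) (d (f t) (f t)) := by
              refine Finset.sum_congr rfl fun t _ => ?_
              rw [Finset.sum_eq_single t]
              · intro t' _ hne
                rw [hd (fun h => hne (hfinj h).symm), single_zero]
              · intro h; exact absurd (Finset.mem_univ t) h
      rw [hform]
      exact isDiag_sum _ _ (fun t _ => isDiag_stdBasis _ _)
    · have hform : W * d * Wᴴ = ∑ t : T,
          single (f t) (f t) (d ((t : Fin m)) ((t : Fin m))) := by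
        calc W * d * Wᴴ
            = ∑ t : T, ∑ t' : T, single (f t) ((t : Fin m)) (1:ℂ) * d
                * (single (f t') ((t' : Fin m)) (1:ℂ))ᴴ := by
              rw [hWdef, Matrix.conjTranspose_sum, Finset.sum_mul, Finset.sum_mul]
              exact Finset.sum_congr rfl fun t _ => by rw [Finset.mul_sum]
          _ = ∑ t : T, ∑ t' : T,
                single (f t) (f t') (d ((t : Fin m)) ((t' : Fin m))) := by
              refine Finset.sum_congr rfl fun t _ => Finset.sum_congr rfl fun t' _ => ?_
              rw [stdBasis_conjT, star_one]
              exact stdBasis_mul_mul d _ _ _ _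
          _ = ∑ t : T, single (f t) (f t) (d ((t : Fin m)) ((t : Fin m))) := by
              refine Finset.sum_congr rfl fun t _ => ?_
              rw [Finset.sum_eq_single t]
              · intro t' _ hne
                rw [hd (fun h => hne (Subtype.ext h).symm), single_zero]
              · intro h; exact absurd (Finset.mem_univ t) h
      rw [hform]
      exact isDiag_sum _ _ (fun t _ => isDiag_stdBasis _ _)
  exact ⟨W, hWW, hWWQ, hQW, hWR, hsupp, hNrm⟩


section Homs

variable {n m : ℕ} {r₁ : Fin n → Fin n → Prop} {r₂ : Fin m → Fin m → Prop}
variable {Φ φ₁ φ₂ : Matrix (Fin n) (Fin n) ℂ → Matrix (Fin m) (Fin m) ℂ}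

lemma mem_cstar_iff {a : Matrix (Fin n) (Fin n) ℂ} :
    a ∈ cstarAlg n r₁ ↔ a ∈ StarAlgebra.adjoin ℂ (digraphAlg n r₁) := Iff.rfl

lemma mem_cstar {a : Matrix (Fin n) (Fin n) ℂ} (ha : a ∈ digraphAlg n r₁) :
    a ∈ cstarAlg n r₁ :=
  StarAlgebra.subset_adjoin ℂ (digraphAlg n r₁) ha

lemma cstar_add {a b : Matrix (Fin n) (Fin n) ℂ} (ha : a ∈ cstarAlg n r₁)
    (hb : b ∈ cstarAlg n r₁) : a + b ∈ cstarAlg n r₁ :=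
  add_mem (mem_cstar_iff.mp ha) (mem_cstar_iff.mp hb)

lemma cstar_mul {a b : Matrix (Fin n) (Fin n) ℂ} (ha : a ∈ cstarAlg n r₁)
    (hb : b ∈ cstarAlg n r₁) : a * b ∈ cstarAlg n r₁ :=
  mul_mem (mem_cstar_iff.mp ha) (mem_cstar_iff.mp hb)

lemma cstar_star {a : Matrix (Fin n) (Fin n) ℂ} (ha : a ∈ cstarAlg n r₁) :
    aᴴ ∈ cstarAlg n r₁ := by
  have h : star a ∈ StarAlgebra.adjoin ℂ (digraphAlg n r₁) :=
    star_mem (mem_cstar_iff.mp ha)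
  rw [Matrix.star_eq_conjTranspose] at h
  exact h

lemma cstar_zero : (0 : Matrix (Fin n) (Fin n) ℂ) ∈ cstarAlg n r₁ :=
  zero_mem (StarAlgebra.adjoin ℂ (digraphAlg n r₁))

lemma cstar_one : (1 : Matrix (Fin n) (Fin n) ℂ) ∈ cstarAlg n r₁ :=
  one_mem (StarAlgebra.adjoin ℂ (digraphAlg n r₁))

lemma cstar_smul (c : ℂ) {a : Matrix (Fin n) (Fin n) ℂ} (ha : a ∈ cstarAlg n r₁) :
    c • a ∈ cstarAlg n r₁ :=
  SMulMemClass.smul_mem c (mem_cstar_iff.mp ha)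

lemma cstar_sum {ι : Type*} {s : Finset ι} {f : ι → Matrix (Fin n) (Fin n) ℂ}
    (hf : ∀ t ∈ s, f t ∈ cstarAlg n r₁) : (∑ t ∈ s, f t) ∈ cstarAlg n r₁ :=
  sum_mem (fun t ht => mem_cstar_iff.mp (hf t ht))

lemma hom_zero (h : IsStarExtHom n m r₁ r₂ Φ) : Φ 0 = 0 := by
  have h0 : (0 : Matrix (Fin n) (Fin n) ℂ) ∈ cstarAlg n r₁ := cstar_zero
  have := h.1 0 h0 0 h0
  rw [add_zero] at this
  exact (left_eq_add.mp this)

lemma hom_sum (h : IsStarExtHom n m r₁ r₂ Φ) {ι : Type*} (s : Finset ι)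
    (f : ι → Matrix (Fin n) (Fin n) ℂ) (hf : ∀ t ∈ s, f t ∈ cstarAlg n r₁) :
    Φ (∑ t ∈ s, f t) = ∑ t ∈ s, Φ (f t) := by
  classical
  induction s using Finset.induction with
  | empty => simpa using hom_zero h
  | insert a s' hx ih =>
      rw [Finset.sum_insert hx,
        h.1 _ (hf a (Finset.mem_insert_self a s')) _
          (cstar_sum (fun t ht => hf t (Finset.mem_insert_of_mem ht))),
        ih (fun t ht => hf t (Finset.mem_insert_of_mem ht)), Finset.sum_insert hx]

lemma intertwine (h1 : IsStarExtHom n m r₁ r₂ φ₁) (h2 : IsStarExtHom n m r₁ r₂ φ₂)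
    (hone : (1 : Matrix (Fin n) (Fin n) ℂ) ∈ digraphAlg n r₁)
    (U : Matrix (Fin m) (Fin m) ℂ) (hUU : Uᴴ * U = 1) (hUU' : U * Uᴴ = 1)
    (hconj : ∀ a ∈ digraphAlg n r₁, Uᴴ * φ₁ a * U = φ₂ a) :
    ∀ x ∈ cstarAlg n r₁, φ₁ x * U = U * φ₂ x := by
  have key : ∀ a ∈ digraphAlg n r₁, φ₁ a * U = U * φ₂ a := by
    intro a ha
    calc φ₁ a * U = U * (Uᴴ * φ₁ a * U) := by
          rw [← Matrix.mul_assoc, ← Matrix.mul_assoc, hUU', one_mul]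
      _ = U * φ₂ a := by rw [hconj a ha]
  intro x hx
  have hx' : x ∈ StarAlgebra.adjoin ℂ (digraphAlg n r₁) := hx
  induction hx' using StarAlgebra.adjoin_induction with
  | mem a ha => exact key a ha
  | algebraMap c =>
      rw [Algebra.algebraMap_eq_smul_one, h1.2.1 c 1 cstar_one, h2.2.1 c 1 cstar_one,
        Matrix.smul_mul, Matrix.mul_smul, key 1 hone]
  | add a b ha hb iha ihb =>
      rw [h1.1 a ha b hb, h2.1 a ha b hb, Matrix.add_mul, Matrix.mul_add, iha ha, ihb hb]
  | mul a b ha hb iha ihb =>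
      rw [h1.2.2.1 a ha b hb, h2.2.2.1 a ha b hb, Matrix.mul_assoc, ihb hb,
        ← Matrix.mul_assoc, iha ha, Matrix.mul_assoc]
  | star a ha iha =>
      rw [Matrix.star_eq_conjTranspose, h1.2.2.2.1 a ha, h2.2.2.2.1 a ha]
      have hadj := congrArg conjTranspose (iha ha)
      rw [conjTranspose_mul, conjTranspose_mul] at hadj
      calc (φ₁ a)ᴴ * U = U * Uᴴ * (φ₁ a)ᴴ * U := by rw [hUU', one_mul]
        _ = U * ((φ₂ a)ᴴ * Uᴴ) * U := by
            rw [Matrix.mul_assoc U, hadj, Matrix.mul_assoc]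
        _ = U * (φ₂ a)ᴴ * (Uᴴ * U) := by
            rw [Matrix.mul_assoc, Matrix.mul_assoc, Matrix.mul_assoc]
        _ = U * (φ₂ a)ᴴ := by rw [hUU, mul_one]

end Homs

end DGP

set_option maxHeartbeats 1600000 in
/-- If two injective standard regular star-extendible homomorphisms between
digraph algebras are conjugate by a unitary of the codomain algebra, then they are conjugate
by a unitary in the normaliser of the diagonal masa. -/
theorem standardRegular_inner_conj_by_normalising_unitary (n m : ℕ)
    (r₁ : Fin n → Fin n → Prop) (r₂ : Fin m → Fin m → Prop)
    (h₁refl : Reflexive r₁) (h₁trans : Transitive r₁)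
    (h₂refl : Reflexive r₂) (h₂trans : Transitive r₂)
    (φ₁ φ₂ : Matrix (Fin n) (Fin n) ℂ → Matrix (Fin m) (Fin m) ℂ)
    (h₁ : IsStandardRegularHom n m r₁ r₂ φ₁) (h₂ : IsStandardRegularHom n m r₁ r₂ φ₂)
    (hinj₁ : Set.InjOn φ₁ (digraphAlg n r₁)) (hinj₂ : Set.InjOn φ₂ (digraphAlg n r₁))
    (U : Matrix (Fin m) (Fin m) ℂ) (hU : IsUnitaryIn m r₂ U)
    (hconj : ∀ a ∈ digraphAlg n r₁, Uᴴ * φ₁ a * U = φ₂ a) :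
    ∃ V : Matrix (Fin m) (Fin m) ℂ,
      V ∈ diagNormaliser m r₂ ∧ Vᴴ * V = 1 ∧ V * Vᴴ = 1 ∧
      ∀ a ∈ digraphAlg n r₁, Vᴴ * φ₁ a * V = φ₂ a := by
  classical
  obtain ⟨hUdg, hUU, hUU'⟩ := hU
  have hse₁ : IsStarExtHom n m r₁ r₂ φ₁ := h₁.1.1
  have hse₂ : IsStarExtHom n m r₁ r₂ φ₂ := h₂.1.1
  have hstd₁ : ∀ v ∈ diagNormaliser n r₁, φ₁ v ∈ diagNormaliser m r₂ := h₁.2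
  have hstd₂ : ∀ v ∈ diagNormaliser n r₁, φ₂ v ∈ diagNormaliser m r₂ := h₂.2
  have hone : (1 : Matrix (Fin n) (Fin n) ℂ) ∈ digraphAlg n r₁ := by
    intro k l hkl
    by_cases h : k = l
    · exact absurd (h ▸ h₁refl k) hkl
    · exact Matrix.one_apply_ne h
  have hint : ∀ x ∈ cstarAlg n r₁, φ₁ x * U = U * φ₂ x :=
    DGP.intertwine hse₁ hse₂ hone U hUU hUU' hconj
  have hEdg : ∀ i j : Fin n, r₁ i j → single i j (1:ℂ) ∈ digraphAlg n r₁ := by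
    intro i j hij k l hkl
    simp only [single, of_apply]
    rw [if_neg]
    rintro ⟨rfl, rfl⟩
    exact hkl hij
  have hEnorm : ∀ i j : Fin n, r₁ i j → single i j (1:ℂ) ∈ diagNormaliser n r₁ := by
    intro i j hij
    refine ⟨hEdg i j hij, ?_, ?_⟩
    · rw [DGP.stdBasis_conjT, star_one, Matrix.single_mul_single_same,
        Matrix.single_mul_single_same, one_mul, one_mul]
    · intro d hd
      constructor
      · rw [DGP.stdBasis_conjT, star_one, DGP.stdBasis_mul_mul]
        exact DGP.isDiag_stdBasis _ _
      · rw [DGP.stdBasis_conjT, star_one, DGP.stdBasis_mul_mul]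
        exact DGP.isDiag_stdBasis _ _
  -- the connectedness relation
  set conn : Fin n → Fin n → Prop := fun i j =>
    single i j (1:ℂ) ∈ cstarAlg n r₁ ∧ DGP.Nrm (φ₁ (single i j (1:ℂ))) ∧
      DGP.Nrm (φ₂ (single i j (1:ℂ))) with hconn_def
  have hconn_of_r : ∀ i j, r₁ i j → conn i j := fun i j h =>
    ⟨DGP.mem_cstar (hEdg i j h), (hstd₁ _ (hEnorm i j h)).2.2, (hstd₂ _ (hEnorm i j h)).2.2⟩
  have hconn_refl : ∀ i, conn i i := fun i => hconn_of_r i i (h₁refl i)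
  have hconn_symm : ∀ i j, conn i j → conn j i := by
    rintro i j ⟨hc, ha, hb⟩
    have he : single j i (1:ℂ) = (single i j (1:ℂ))ᴴ := by
      rw [DGP.stdBasis_conjT, star_one]
    refine ⟨he ▸ DGP.cstar_star hc, ?_, ?_⟩
    · rw [he, hse₁.2.2.2.1 _ hc]; exact ha.conjT
    · rw [he, hse₂.2.2.2.1 _ hc]; exact hb.conjT
  have hconn_trans : ∀ i j k, conn i j → conn j k → conn i k := by
    rintro i j k ⟨hc1, ha1, hb1⟩ ⟨hc2, ha2, hb2⟩
    have he : single i k (1:ℂ)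
        = single i j (1:ℂ) * single j k (1:ℂ) := by
      rw [Matrix.single_mul_single_same, one_mul]
    refine ⟨he ▸ DGP.cstar_mul hc1 hc2, ?_, ?_⟩
    · rw [he, hse₁.2.2.1 _ hc1 _ hc2]; exact ha1.mul ha2
    · rw [he, hse₂.2.2.1 _ hc1 _ hc2]; exact hb1.mul hb2
  -- base-point map
  set cls : Fin n → Finset (Fin n) := fun i => Finset.univ.filter (fun j => conn i j)
    with hcls_def
  have hclsne : ∀ i, (cls i).Nonempty := fun i =>
    ⟨i, Finset.mem_filter.mpr ⟨Finset.mem_univ i, hconn_refl i⟩⟩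
  set β : Fin n → Fin n := fun i => (cls i).min' (hclsne i) with hβ_def
  have hβconn : ∀ i, conn i (β i) :=
    fun i => (Finset.mem_filter.mp ((cls i).min'_mem (hclsne i))).2
  have hβeq : ∀ i j, conn i j → β i = β j := by
    intro i j hij
    have hcl : cls i = cls j := by
      ext k
      simp only [hcls_def, Finset.mem_filter, Finset.mem_univ, true_and]
      exact ⟨fun h => hconn_trans _ _ _ (hconn_symm _ _ hij) h,
        fun h => hconn_trans _ _ _ hij h⟩
    show (cls i).min' _ = (cls j).min' _
    congr 1
  -- images of matrix units
  set F : Fin n → Fin n → Matrix (Fin m) (Fin m) ℂ :=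
    fun i j => φ₁ (single i j (1:ℂ)) with hF_def
  set G : Fin n → Fin n → Matrix (Fin m) (Fin m) ℂ :=
    fun i j => φ₂ (single i j (1:ℂ)) with hG_def
  have hFmul : ∀ i j k, conn i j → conn j k → F i j * F j k = F i k := by
    intro i j k hij hjk
    show φ₁ _ * φ₁ _ = φ₁ _
    rw [← hse₁.2.2.1 _ hij.1 _ hjk.1, Matrix.single_mul_single_same, one_mul]
  have hGmul : ∀ i j k, conn i j → conn j k → G i j * G j k = G i k := by
    intro i j k hij hjk
    show φ₂ _ * φ₂ _ = φ₂ _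
    rw [← hse₂.2.2.1 _ hij.1 _ hjk.1, Matrix.single_mul_single_same, one_mul]
  have hFadj : ∀ i j, conn i j → (F i j)ᴴ = F j i := by
    intro i j hij
    show (φ₁ _)ᴴ = φ₁ _
    rw [← hse₁.2.2.2.1 _ hij.1, DGP.stdBasis_conjT, star_one]
  have hGadj : ∀ i j, conn i j → (G i j)ᴴ = G j i := by
    intro i j hij
    show (φ₂ _)ᴴ = φ₂ _
    rw [← hse₂.2.2.2.1 _ hij.1, DGP.stdBasis_conjT, star_one]
  have hFnrm : ∀ i j, conn i j → DGP.Nrm (F i j) := fun i j hij => hij.2.1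
  have hGnrm : ∀ i j, conn i j → DGP.Nrm (G i j) := fun i j hij => hij.2.2
  have hQdiag : ∀ i, (F i i).IsDiag := by
    intro i
    refine DGP.isDiag_of_nrm_proj (hFadj i i (hconn_refl i))
      (hFmul i i i (hconn_refl i) (hconn_refl i)) ?_
    intro d hd
    exact (hFnrm i i (hconn_refl i) d hd).1
  have hRdiag : ∀ i, (G i i).IsDiag := by
    intro i
    refine DGP.isDiag_of_nrm_proj (hGadj i i (hconn_refl i))
      (hGmul i i i (hconn_refl i) (hconn_refl i)) ?_
    intro d hd
    exact (hGnrm i i (hconn_refl i) d hd).1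
  have hQortho : ∀ i j : Fin n, i ≠ j → F i i * F j j = 0 := by
    intro i j hij
    show φ₁ _ * φ₁ _ = 0
    rw [← hse₁.2.2.1 _ (hconn_refl i).1 _ (hconn_refl j).1,
      Matrix.single_mul_single_of_ne (1:ℂ) i i j hij (1:ℂ), DGP.hom_zero hse₁]
  have hRortho : ∀ i j : Fin n, i ≠ j → G i i * G j j = 0 := by
    intro i j hij
    show φ₂ _ * φ₂ _ = 0
    rw [← hse₂.2.2.1 _ (hconn_refl i).1 _ (hconn_refl j).1,
      Matrix.single_mul_single_of_ne (1:ℂ) i i j hij (1:ℂ), DGP.hom_zero hse₂]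
  have hone_eq : (1 : Matrix (Fin n) (Fin n) ℂ) = ∑ i, single i i (1:ℂ) := by
    ext k l
    rw [Matrix.sum_apply]
    by_cases h : k = l
    · subst h
      rw [Matrix.one_apply_eq, Finset.sum_eq_single k]
      · simp [single]
      · intro t _ ht
        simp only [single, of_apply]
        rw [if_neg]
        rintro ⟨rfl, -⟩
        exact ht rfl
      · intro h; exact absurd (Finset.mem_univ k) h
    · rw [Matrix.one_apply_ne h]
      symm
      refine Finset.sum_eq_zero fun t _ => ?_
      simp only [single, of_apply]
      rw [if_neg]
      rintro ⟨rfl, rfl⟩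
      exact h rfl
  have hPsum : φ₁ 1 = ∑ i, F i i := by
    conv_lhs => rw [hone_eq]
    exact DGP.hom_sum hse₁ Finset.univ _ (fun i _ => (hconn_refl i).1)
  have hP'sum : φ₂ 1 = ∑ i, G i i := by
    conv_lhs => rw [hone_eq]
    exact DGP.hom_sum hse₂ Finset.univ _ (fun i _ => (hconn_refl i).1)
  have hPdiag : (φ₁ 1).IsDiag := by
    rw [hPsum]; exact DGP.isDiag_sum _ _ (fun i _ => hQdiag i)
  have hP'diag : (φ₂ 1).IsDiag := by
    rw [hP'sum]; exact DGP.isDiag_sum _ _ (fun i _ => hRdiag i)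
  have hQP : ∀ i, F i i * φ₁ 1 = F i i := by
    intro i
    show φ₁ _ * φ₁ 1 = φ₁ _
    rw [← hse₁.2.2.1 _ (hconn_refl i).1 _ DGP.cstar_one, mul_one]
  have hRP' : ∀ i, G i i * φ₂ 1 = G i i := by
    intro i
    show φ₂ _ * φ₂ 1 = φ₂ _
    rw [← hse₂.2.2.1 _ (hconn_refl i).1 _ DGP.cstar_one, mul_one]
  have hPP : φ₁ 1 * φ₁ 1 = φ₁ 1 := by
    rw [← hse₁.2.2.1 _ DGP.cstar_one _ DGP.cstar_one, mul_one]
  have hP'P' : φ₂ 1 * φ₂ 1 = φ₂ 1 := by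
    rw [← hse₂.2.2.1 _ DGP.cstar_one _ DGP.cstar_one, mul_one]
  have hPadj : (φ₁ 1)ᴴ = φ₁ 1 := by
    rw [← hse₁.2.2.2.1 _ DGP.cstar_one, conjTranspose_one]
  have hP'adj : (φ₂ 1)ᴴ = φ₂ 1 := by
    rw [← hse₂.2.2.2.1 _ DGP.cstar_one, conjTranspose_one]
  have hPU : φ₁ 1 * U = U * φ₂ 1 := hint 1 DGP.cstar_one
  have hQU : ∀ c, F c c * U = U * G c c := fun c => hint _ (hconn_refl c).1
  have hintFG : ∀ i j, conn i j → F i j * U = U * G i j := fun i j hij => hint _ hij.1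
  -- diagonal unitary blocks of U
  have hBQ : ∀ c, (F c c * U) * (F c c * U)ᴴ = F c c := by
    intro c
    rw [conjTranspose_mul]
    calc F c c * U * (Uᴴ * (F c c)ᴴ) = F c c * (U * Uᴴ) * (F c c)ᴴ := by
          simp only [Matrix.mul_assoc]
      _ = F c c := by
          rw [hUU', mul_one, hFadj c c (hconn_refl c),
            hFmul c c c (hconn_refl c) (hconn_refl c)]
  have hBR : ∀ c, (F c c * U)ᴴ * (F c c * U) = G c c := by
    intro c
    rw [hQU c, conjTranspose_mul, hGadj c c (hconn_refl c)]
    calc G c c * Uᴴ * (U * G c c) = G c c * (Uᴴ * U) * G c c := by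
          simp only [Matrix.mul_assoc]
      _ = G c c := by
          rw [hUU, mul_one, hGmul c c c (hconn_refl c) (hconn_refl c)]
  have hperm : ∀ c : Fin n, ∃ W : Matrix (Fin m) (Fin m) ℂ,
      Wᴴ * W = G c c ∧ W * Wᴴ = F c c ∧ F c c * W = W ∧ W * G c c = W ∧
      (∀ k l, (F c c * U) k l = 0 → W k l = 0) ∧ DGP.Nrm W := fun c =>
    DGP.perm_sub (F c c * U) (F c c) (G c c) (hQdiag c) (hRdiag c)
      (hFmul c c c (hconn_refl c) (hconn_refl c))
      (hGmul c c c (hconn_refl c) (hconn_refl c)) (hBQ c) (hBR c)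
  choose W hWR hWQ hQW hWRr hWsupp hWnrm using hperm
  -- the complement block
  have h1Pdiag : (1 - φ₁ 1).IsDiag := Matrix.isDiag_one.sub hPdiag
  have h1P'diag : (1 - φ₂ 1).IsDiag := Matrix.isDiag_one.sub hP'diag
  have h1P2 : (1 - φ₁ 1) * (1 - φ₁ 1) = 1 - φ₁ 1 := by
    have h : (1 - φ₁ 1) * (1 - φ₁ 1) = 1 - φ₁ 1 - φ₁ 1 + φ₁ 1 * φ₁ 1 := by noncomm_ring
    rw [h, hPP]
    abel
  have h1P'2 : (1 - φ₂ 1) * (1 - φ₂ 1) = 1 - φ₂ 1 := by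
    have h : (1 - φ₂ 1) * (1 - φ₂ 1) = 1 - φ₂ 1 - φ₂ 1 + φ₂ 1 * φ₂ 1 := by noncomm_ring
    rw [h, hP'P']
    abel
  have h1PU : (1 - φ₁ 1) * U = U * (1 - φ₂ 1) := by
    rw [Matrix.sub_mul, Matrix.mul_sub, one_mul, mul_one, hPU]
  have h1Padj : (1 - φ₁ 1)ᴴ = 1 - φ₁ 1 := by
    rw [conjTranspose_sub, conjTranspose_one, hPadj]
  have h1P'adj : (1 - φ₂ 1)ᴴ = 1 - φ₂ 1 := by
    rw [conjTranspose_sub, conjTranspose_one, hP'adj]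
  have hB0Q : ((1 - φ₁ 1) * U) * ((1 - φ₁ 1) * U)ᴴ = 1 - φ₁ 1 := by
    rw [conjTranspose_mul, h1Padj]
    calc (1 - φ₁ 1) * U * (Uᴴ * (1 - φ₁ 1)) = (1 - φ₁ 1) * (U * Uᴴ) * (1 - φ₁ 1) := by
          simp only [Matrix.mul_assoc]
      _ = 1 - φ₁ 1 := by rw [hUU', mul_one, h1P2]
  have hB0R : ((1 - φ₁ 1) * U)ᴴ * ((1 - φ₁ 1) * U) = 1 - φ₂ 1 := by
    rw [h1PU, conjTranspose_mul, h1P'adj]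
    calc (1 - φ₂ 1) * Uᴴ * (U * (1 - φ₂ 1)) = (1 - φ₂ 1) * (Uᴴ * U) * (1 - φ₂ 1) := by
          simp only [Matrix.mul_assoc]
      _ = 1 - φ₂ 1 := by rw [hUU, mul_one, h1P'2]
  obtain ⟨W0, hW0R, hW0Q, hQW0, hW0Rr, hW0supp, hW0nrm⟩ :=
    DGP.perm_sub ((1 - φ₁ 1) * U) (1 - φ₁ 1) (1 - φ₂ 1) h1Pdiag h1P'diag h1P2 h1P'2 hB0Q hB0R
  -- the normalising unitary
  set Vb : Fin n → Matrix (Fin m) (Fin m) ℂ :=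
    fun i => F i (β i) * W (β i) * G (β i) i with hVb_def
  set V : Matrix (Fin m) (Fin m) ℂ := (∑ i, Vb i) + W0 with hV_def

  -- basic structure of the blocks Vb i
  have hVbF : ∀ i, F i i * Vb i = Vb i := by
    intro i
    show F i i * (F i (β i) * W (β i) * G (β i) i) = _
    rw [← Matrix.mul_assoc, ← Matrix.mul_assoc, hFmul i i (β i) (hconn_refl i) (hβconn i)]
  have hVbG : ∀ i, Vb i * G i i = Vb i := by
    intro i
    show F i (β i) * W (β i) * G (β i) i * G i i = _
    rw [Matrix.mul_assoc (F i (β i) * W (β i)),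
      hGmul (β i) i i (hconn_symm _ _ (hβconn i)) (hconn_refl i)]
  have hVbadj : ∀ i, (Vb i)ᴴ = G i (β i) * (W (β i))ᴴ * F (β i) i := by
    intro i
    show (F i (β i) * W (β i) * G (β i) i)ᴴ = _
    rw [conjTranspose_mul, conjTranspose_mul, hFadj i (β i) (hβconn i),
      hGadj (β i) i (hconn_symm _ _ (hβconn i))]
    simp only [Matrix.mul_assoc]
  have hVbFadj : ∀ i, (Vb i)ᴴ = (Vb i)ᴴ * F i i := by
    intro i
    conv_lhs => rw [← hVbF i]
    rw [conjTranspose_mul, hFadj i i (hconn_refl i)]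
  have hVbGadj : ∀ i, (Vb i)ᴴ = G i i * (Vb i)ᴴ := by
    intro i
    conv_lhs => rw [← hVbG i]
    rw [conjTranspose_mul, hGadj i i (hconn_refl i)]
  have hVbVb : ∀ i, (Vb i)ᴴ * Vb i = G i i := by
    intro i
    rw [hVbadj i]
    show G i (β i) * (W (β i))ᴴ * F (β i) i * (F i (β i) * W (β i) * G (β i) i) = _
    calc G i (β i) * (W (β i))ᴴ * F (β i) i * (F i (β i) * W (β i) * G (β i) i)
        = G i (β i) * ((W (β i))ᴴ * ((F (β i) i * F i (β i)) * W (β i))) * G (β i) i := by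
          simp only [Matrix.mul_assoc]
      _ = G i (β i) * G (β i) (β i) * G (β i) i := by
          rw [hFmul (β i) i (β i) (hconn_symm _ _ (hβconn i)) (hβconn i), hQW (β i), hWR (β i)]
      _ = G i i := by
          rw [hGmul i (β i) (β i) (hβconn i) (hconn_refl (β i)),
            hGmul i (β i) i (hβconn i) (hconn_symm _ _ (hβconn i))]
  have hVbVb' : ∀ i, Vb i * (Vb i)ᴴ = F i i := by
    intro i
    rw [hVbadj i]
    show F i (β i) * W (β i) * G (β i) i * (G i (β i) * (W (β i))ᴴ * F (β i) i) = _
    calc F i (β i) * W (β i) * G (β i) i * (G i (β i) * (W (β i))ᴴ * F (β i) i)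
        = F i (β i) * ((W (β i) * (G (β i) i * G i (β i))) * (W (β i))ᴴ) * F (β i) i := by
          simp only [Matrix.mul_assoc]
      _ = F i (β i) * F (β i) (β i) * F (β i) i := by
          rw [hGmul (β i) i (β i) (hconn_symm _ _ (hβconn i)) (hβconn i), hWRr (β i), hWQ (β i)]
      _ = F i i := by
          rw [hFmul i (β i) (β i) (hβconn i) (hconn_refl (β i)),
            hFmul i (β i) i (hβconn i) (hconn_symm _ _ (hβconn i))]
  have hVbNrm : ∀ i, DGP.Nrm (Vb i) := fun i =>
    ((hFnrm i (β i) (hβconn i)).mul (hWnrm (β i))).mul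
      (hGnrm (β i) i (hconn_symm _ _ (hβconn i)))
  -- cross terms vanish
  have hcrossV : ∀ d : Matrix (Fin m) (Fin m) ℂ, d.IsDiag → ∀ i j, i ≠ j →
      (Vb i)ᴴ * d * Vb j = 0 := by
    intro d hd i j hij
    calc (Vb i)ᴴ * d * Vb j
        = ((Vb i)ᴴ * F i i) * d * (F j j * Vb j) := by rw [← hVbFadj i, hVbF j]
      _ = (Vb i)ᴴ * ((F i i * d) * F j j) * Vb j := by simp only [Matrix.mul_assoc]
      _ = (Vb i)ᴴ * ((d * F i i) * F j j) * Vb j := by rw [DGP.diag_comm (hQdiag i) hd]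
      _ = (Vb i)ᴴ * (d * (F i i * F j j)) * Vb j := by simp only [Matrix.mul_assoc]
      _ = 0 := by rw [hQortho i j hij, mul_zero, mul_zero, zero_mul]
  have hcrossW0 : ∀ d : Matrix (Fin m) (Fin m) ℂ, d.IsDiag → ∀ i,
      (Vb i)ᴴ * d * W0 = 0 := by
    intro d hd i
    have hFP0 : F i i * (1 - φ₁ 1) = 0 := by
      rw [Matrix.mul_sub, mul_one, hQP i, sub_self]
    calc (Vb i)ᴴ * d * W0
        = ((Vb i)ᴴ * F i i) * d * ((1 - φ₁ 1) * W0) := by rw [← hVbFadj i, hQW0]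
      _ = (Vb i)ᴴ * ((F i i * d) * (1 - φ₁ 1)) * W0 := by simp only [Matrix.mul_assoc]
      _ = (Vb i)ᴴ * ((d * F i i) * (1 - φ₁ 1)) * W0 := by rw [DGP.diag_comm (hQdiag i) hd]
      _ = (Vb i)ᴴ * (d * (F i i * (1 - φ₁ 1))) * W0 := by simp only [Matrix.mul_assoc]
      _ = 0 := by rw [hFP0, mul_zero, mul_zero, zero_mul]
  have hcrossW0' : ∀ d : Matrix (Fin m) (Fin m) ℂ, d.IsDiag → ∀ j,
      W0ᴴ * d * Vb j = 0 := by
    intro d hd j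
    have h := congrArg conjTranspose (hcrossW0 dᴴ hd.conjTranspose j)
    rw [conjTranspose_mul, conjTranspose_mul, conjTranspose_conjTranspose,
      conjTranspose_conjTranspose, conjTranspose_zero, ← Matrix.mul_assoc] at h
    exact h
  have hcrossV2 : ∀ d : Matrix (Fin m) (Fin m) ℂ, d.IsDiag → ∀ i j, i ≠ j →
      Vb i * d * (Vb j)ᴴ = 0 := by
    intro d hd i j hij
    calc Vb i * d * (Vb j)ᴴ
        = (Vb i * G i i) * d * (G j j * (Vb j)ᴴ) := by rw [hVbG i, ← hVbGadj j]
      _ = Vb i * ((G i i * d) * G j j) * (Vb j)ᴴ := by simp only [Matrix.mul_assoc]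
      _ = Vb i * ((d * G i i) * G j j) * (Vb j)ᴴ := by rw [DGP.diag_comm (hRdiag i) hd]
      _ = Vb i * (d * (G i i * G j j)) * (Vb j)ᴴ := by simp only [Matrix.mul_assoc]
      _ = 0 := by rw [hRortho i j hij, mul_zero, mul_zero, zero_mul]
  have hW0adj : W0ᴴ = (1 - φ₂ 1) * W0ᴴ := by
    conv_lhs => rw [← hW0Rr]
    rw [conjTranspose_mul, h1P'adj]
  have hcrossW02 : ∀ d : Matrix (Fin m) (Fin m) ℂ, d.IsDiag → ∀ i,
      Vb i * d * W0ᴴ = 0 := by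
    intro d hd i
    have hGP0 : G i i * (1 - φ₂ 1) = 0 := by
      rw [Matrix.mul_sub, mul_one, hRP' i, sub_self]
    calc Vb i * d * W0ᴴ
        = (Vb i * G i i) * d * ((1 - φ₂ 1) * W0ᴴ) := by rw [hVbG i, ← hW0adj]
      _ = Vb i * ((G i i * d) * (1 - φ₂ 1)) * W0ᴴ := by simp only [Matrix.mul_assoc]
      _ = Vb i * ((d * G i i) * (1 - φ₂ 1)) * W0ᴴ := by rw [DGP.diag_comm (hRdiag i) hd]
      _ = Vb i * (d * (G i i * (1 - φ₂ 1))) * W0ᴴ := by simp only [Matrix.mul_assoc]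
      _ = 0 := by rw [hGP0, mul_zero, mul_zero, zero_mul]
  have hcrossW02' : ∀ d : Matrix (Fin m) (Fin m) ℂ, d.IsDiag → ∀ j,
      W0 * d * (Vb j)ᴴ = 0 := by
    intro d hd j
    have h := congrArg conjTranspose (hcrossW02 dᴴ hd.conjTranspose j)
    rw [conjTranspose_mul, conjTranspose_mul, conjTranspose_conjTranspose,
      conjTranspose_conjTranspose, conjTranspose_zero, ← Matrix.mul_assoc] at h
    exact h
  -- expansion of sandwiches
  have hexpand : ∀ X : Matrix (Fin m) (Fin m) ℂ,
      Vᴴ * X * V = (∑ i, ∑ j, (Vb i)ᴴ * X * Vb j) + (∑ i, (Vb i)ᴴ * X * W0)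
        + (∑ j, W0ᴴ * X * Vb j) + W0ᴴ * X * W0 := by
    intro X
    rw [hV_def]
    simp only [conjTranspose_add, Matrix.conjTranspose_sum, Matrix.add_mul, Matrix.mul_add,
      Finset.sum_mul, Finset.mul_sum, Finset.sum_add_distrib]
    rw [Finset.sum_comm]
    abel
  have hexpand' : ∀ X : Matrix (Fin m) (Fin m) ℂ,
      V * X * Vᴴ = (∑ i, ∑ j, Vb i * X * (Vb j)ᴴ) + (∑ i, Vb i * X * W0ᴴ)
        + (∑ j, W0 * X * (Vb j)ᴴ) + W0 * X * W0ᴴ := by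
    intro X
    rw [hV_def]
    simp only [conjTranspose_add, Matrix.conjTranspose_sum, Matrix.add_mul, Matrix.mul_add,
      Finset.sum_mul, Finset.mul_sum, Finset.sum_add_distrib]
    rw [Finset.sum_comm]
    abel
  have hVdV : ∀ d : Matrix (Fin m) (Fin m) ℂ, d.IsDiag →
      Vᴴ * d * V = (∑ i, (Vb i)ᴴ * d * Vb i) + W0ᴴ * d * W0 := by
    intro d hd
    rw [hexpand d,
      Finset.sum_congr rfl (fun i (_ : i ∈ Finset.univ) => Finset.sum_eq_single i
        (fun j _ hji => hcrossV d hd i j (Ne.symm hji))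
        (fun h => absurd (Finset.mem_univ i) h)),
      Finset.sum_eq_zero (fun i _ => hcrossW0 d hd i),
      Finset.sum_eq_zero (fun j _ => hcrossW0' d hd j), add_zero, add_zero]
  have hVdV' : ∀ d : Matrix (Fin m) (Fin m) ℂ, d.IsDiag →
      V * d * Vᴴ = (∑ i, Vb i * d * (Vb i)ᴴ) + W0 * d * W0ᴴ := by
    intro d hd
    rw [hexpand' d,
      Finset.sum_congr rfl (fun i (_ : i ∈ Finset.univ) => Finset.sum_eq_single i
        (fun j _ hji => hcrossV2 d hd i j (Ne.symm hji))
        (fun h => absurd (Finset.mem_univ i) h)),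
      Finset.sum_eq_zero (fun i _ => hcrossW02 d hd i),
      Finset.sum_eq_zero (fun j _ => hcrossW02' d hd j), add_zero, add_zero]
  -- V is a unitary
  have hVunit : Vᴴ * V = 1 := by
    calc Vᴴ * V = Vᴴ * 1 * V := by rw [mul_one]
      _ = (∑ i, (Vb i)ᴴ * 1 * Vb i) + W0ᴴ * 1 * W0 := hVdV 1 Matrix.isDiag_one
      _ = (∑ i, G i i) + (1 - φ₂ 1) := by
          rw [Finset.sum_congr rfl (fun i (_ : i ∈ Finset.univ) => by
            rw [mul_one, hVbVb i]), mul_one, hW0R]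
      _ = 1 := by rw [← hP'sum]; abel
  have hVunit' : V * Vᴴ = 1 := by
    calc V * Vᴴ = V * 1 * Vᴴ := by rw [mul_one]
      _ = (∑ i, Vb i * 1 * (Vb i)ᴴ) + W0 * 1 * W0ᴴ := hVdV' 1 Matrix.isDiag_one
      _ = (∑ i, F i i) + (1 - φ₁ 1) := by
          rw [Finset.sum_congr rfl (fun i (_ : i ∈ Finset.univ) => by
            rw [mul_one, hVbVb' i]), mul_one, hW0Q]
      _ = 1 := by rw [← hPsum]; abel
  -- V normalises the diagonal
  have hVnorm : ∀ d : Matrix (Fin m) (Fin m) ℂ, d.IsDiag →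
      (Vᴴ * d * V).IsDiag ∧ (V * d * Vᴴ).IsDiag := by
    intro d hd
    constructor
    · rw [hVdV d hd]
      exact (DGP.isDiag_sum _ _ (fun i _ => (hVbNrm i d hd).1)).add (hW0nrm d hd).1
    · rw [hVdV' d hd]
      exact (DGP.isDiag_sum _ _ (fun i _ => (hVbNrm i d hd).2)).add (hW0nrm d hd).2
  -- V lies in the digraph algebra
  have hVbsupp : ∀ i k l, ¬ r₂ k l → Vb i k l = 0 := by
    intro i k l hkl
    have hUkl : U k l = 0 := hUdg k l hkl
    have hBi : F i (β i) * (F (β i) (β i) * U) * G (β i) i = F i i * U := by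
      calc F i (β i) * (F (β i) (β i) * U) * G (β i) i
          = (F i (β i) * F (β i) (β i)) * (U * G (β i) i) := by simp only [Matrix.mul_assoc]
        _ = F i (β i) * (F (β i) i * U) := by
            rw [hFmul i (β i) (β i) (hβconn i) (hconn_refl (β i)),
              ← hintFG (β i) i (hconn_symm _ _ (hβconn i))]
        _ = (F i (β i) * F (β i) i) * U := by rw [Matrix.mul_assoc]
        _ = F i i * U := by rw [hFmul i (β i) i (hβconn i) (hconn_symm _ _ (hβconn i))]
    have hzero : (F i (β i) * (F (β i) (β i) * U) * G (β i) i) k l = 0 := by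
      rw [hBi, DGP.diag_mul_apply (hQdiag i), hUkl, mul_zero]
    exact DGP.supp_transfer (F i (β i)) (W (β i)) (F (β i) (β i) * U) (G (β i) i)
      (fun k p p' => (hFnrm i (β i) (hβconn i)).row_sparse k p p')
      (fun l q q' => (hGnrm (β i) i (hconn_symm _ _ (hβconn i))).col_sparse l q q')
      (hWsupp (β i)) k l hzero
  have hVdg : V ∈ digraphAlg m r₂ := by
    intro k l hkl
    show ((∑ i, Vb i) + W0) k l = 0
    rw [Matrix.add_apply, Matrix.sum_apply]
    have hW0kl : W0 k l = 0 := by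
      apply hW0supp
      rw [DGP.diag_mul_apply h1Pdiag, hUdg k l hkl, mul_zero]
    rw [hW0kl, add_zero]
    exact Finset.sum_eq_zero fun i _ => hVbsupp i k l hkl
  -- intertwining on matrix units
  have hFW0 : ∀ i j, conn i j → F i j * W0 = 0 := by
    intro i j hij
    have h1 : F i j * (1 - φ₁ 1) = 0 := by
      have h2 : F i j * φ₁ 1 = F i j := by
        show φ₁ _ * φ₁ 1 = φ₁ _
        rw [← hse₁.2.2.1 _ hij.1 _ DGP.cstar_one, mul_one]
      rw [Matrix.mul_sub, mul_one, h2, sub_self]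
    calc F i j * W0 = F i j * ((1 - φ₁ 1) * W0) := by rw [hQW0]
      _ = (F i j * (1 - φ₁ 1)) * W0 := by rw [Matrix.mul_assoc]
      _ = 0 := by rw [h1, zero_mul]
  have hW0F : ∀ i j, conn i j → W0ᴴ * F i j = 0 := by
    intro i j hij
    have h := congrArg conjTranspose (hFW0 j i (hconn_symm _ _ hij))
    rw [conjTranspose_mul, conjTranspose_zero, hFadj j i (hconn_symm _ _ hij)] at h
    exact h
  have hVFV : ∀ i j, r₁ i j → Vᴴ * F i j * V = G i j := by
    intro i j hr
    have hcij : conn i j := hconn_of_r i j hr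
    have hβij : β i = β j := hβeq i j hcij
    have hconn_ci : conn (β i) i := hconn_symm _ _ (hβconn i)
    have hconn_jc : conn j (β i) := by rw [hβij]; exact hβconn j
    have hterm : ∀ k l', (k ≠ i ∨ l' ≠ j) → (Vb k)ᴴ * F i j * Vb l' = 0 := by
      intro k l' hkl
      have hsplit : F i j = F i i * F i j * F j j := by
        rw [hFmul i i j (hconn_refl i) hcij, hFmul i j j hcij (hconn_refl j)]
      rcases hkl with hk | hl
      · calc (Vb k)ᴴ * F i j * Vb l'
            = ((Vb k)ᴴ * F k k) * (F i i * F i j * F j j) * Vb l' := by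
              rw [← hVbFadj k, ← hsplit]
          _ = (Vb k)ᴴ * ((F k k * F i i) * (F i j * (F j j * Vb l'))) := by
              simp only [Matrix.mul_assoc]
          _ = 0 := by rw [hQortho k i hk, zero_mul, mul_zero]
      · calc (Vb k)ᴴ * F i j * Vb l'
            = (Vb k)ᴴ * (F i i * F i j * F j j) * (F l' l' * Vb l') := by
              rw [← hsplit, hVbF l']
          _ = (Vb k)ᴴ * (F i i * (F i j * ((F j j * F l' l') * Vb l'))) := by
              simp only [Matrix.mul_assoc]
          _ = 0 := by
              rw [hQortho j l' (Ne.symm hl), zero_mul, mul_zero, mul_zero, mul_zero]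
    have hgroup2 : (∑ k, (Vb k)ᴴ * F i j * W0) = 0 := Finset.sum_eq_zero fun k _ => by
      rw [Matrix.mul_assoc, hFW0 i j hcij, mul_zero]
    have hgroup3 : (∑ l', W0ᴴ * F i j * Vb l') = 0 := Finset.sum_eq_zero fun l' _ => by
      rw [hW0F i j hcij, zero_mul]
    have hgroup4 : W0ᴴ * F i j * W0 = 0 := by rw [hW0F i j hcij, zero_mul]
    have hgroup1 : (∑ k, ∑ l', (Vb k)ᴴ * F i j * Vb l') = (Vb i)ᴴ * F i j * Vb j := by
      rw [Finset.sum_eq_single i]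
      · rw [Finset.sum_eq_single j]
        · intro l' _ hl'
          exact hterm i l' (Or.inr hl')
        · intro h; exact absurd (Finset.mem_univ j) h
      · intro k _ hk
        exact Finset.sum_eq_zero fun l' _ => hterm k l' (Or.inl hk)
      · intro h; exact absurd (Finset.mem_univ i) h
    rw [hexpand (F i j), hgroup1, hgroup2, hgroup3, hgroup4, add_zero, add_zero, add_zero]
    have hVbj : Vb j = F j (β i) * W (β i) * G (β i) j := by
      show F j (β j) * W (β j) * G (β j) j = _
      rw [← hβij]
    rw [hVbadj i, hVbj]
    calc G i (β i) * (W (β i))ᴴ * F (β i) i * F i j * (F j (β i) * W (β i) * G (β i) j)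
        = G i (β i) * ((W (β i))ᴴ * (((F (β i) i * F i j) * F j (β i)) * W (β i)))
            * G (β i) j := by
          simp only [Matrix.mul_assoc]
      _ = G i (β i) * ((W (β i))ᴴ * (F (β i) (β i) * W (β i))) * G (β i) j := by
          rw [hFmul (β i) i j hconn_ci hcij,
            hFmul (β i) j (β i) (hconn_symm _ _ hconn_jc) hconn_jc]
      _ = G i (β i) * G (β i) (β i) * G (β i) j := by rw [hQW (β i), hWR (β i)]
      _ = G i j := by
          rw [hGmul i (β i) (β i) (hβconn i) (hconn_refl (β i)),
            hGmul i (β i) j (hβconn i) (hconn_symm _ _ hconn_jc)]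
  -- conclusion
  refine ⟨V, ⟨hVdg, ?_, hVnorm⟩, hVunit, hVunit', ?_⟩
  · rw [Matrix.mul_assoc, hVunit, mul_one]
  · intro a ha
    have hVFV' : ∀ i j, r₁ i j →
        Vᴴ * φ₁ (single i j (1:ℂ)) * V = φ₂ (single i j (1:ℂ)) := by
      intro i j hr
      have h := hVFV i j hr
      simp only [hF_def, hG_def] at h
      exact h
    have hterm_dg : ∀ i j : Fin n, single i j (a i j) ∈ digraphAlg n r₁ := by
      intro i j k l hkl
      simp only [single, of_apply]
      split_ifs with h
      · rcases h with ⟨rfl, rfl⟩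
        exact ha _ _ hkl
      · rfl
    have hphi1 : φ₁ a = ∑ i, ∑ j, φ₁ (single i j (a i j)) := by
      conv_lhs => rw [matrix_eq_sum_single a]
      rw [DGP.hom_sum hse₁ Finset.univ _
        (fun i _ => DGP.cstar_sum (fun j _ => DGP.mem_cstar (hterm_dg i j)))]
      exact Finset.sum_congr rfl fun i _ =>
        DGP.hom_sum hse₁ Finset.univ _ (fun j _ => DGP.mem_cstar (hterm_dg i j))
    have hphi2 : φ₂ a = ∑ i, ∑ j, φ₂ (single i j (a i j)) := by
      conv_lhs => rw [matrix_eq_sum_single a]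
      rw [DGP.hom_sum hse₂ Finset.univ _
        (fun i _ => DGP.cstar_sum (fun j _ => DGP.mem_cstar (hterm_dg i j)))]
      exact Finset.sum_congr rfl fun i _ =>
        DGP.hom_sum hse₂ Finset.univ _ (fun j _ => DGP.mem_cstar (hterm_dg i j))
    rw [hphi1, hphi2]
    simp only [Finset.mul_sum, Finset.sum_mul]
    refine Finset.sum_congr rfl fun i _ => Finset.sum_congr rfl fun j _ => ?_
    by_cases hr : r₁ i j
    · have h1 : single i j (a i j) = a i j • single i j (1:ℂ) := by
        rw [smul_single, smul_eq_mul, mul_one]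
      rw [h1, hse₁.2.1 (a i j) _ (hconn_of_r i j hr).1,
        hse₂.2.1 (a i j) _ (hconn_of_r i j hr).1,
        Matrix.mul_smul, Matrix.smul_mul, hVFV' i j hr]
    · rw [ha i j hr, Matrix.single_zero, DGP.hom_zero hse₁, DGP.hom_zero hse₂,
        mul_zero, zero_mul]

end
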